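/- Let T be a finite tree with an odd number of edges and let v be a vertex of T. Then there exists an edge e incident to v such that each of the two connected components of the graph obtained from T by deleting e contains an even number of edges. -/

import Mathlib

open SimpleGraph

section OddTreeAux

variable {V : Type*} [Fintype V] [DecidableEq V] {G : SimpleGraph V}

private lemma odd_tree_bridge (hT : G.IsTree) {v u : V} (h : G.Adj v u) :
    ¬ (G.deleteEdges {s(v, u)}).Reachable v u := by
  have hb := (isAcyclic_iff_forall_adj_isBridge.mp hT.IsAcyclic) h
  rw [isBridge_iff] at hb
  exact hb

private lemma odd_tree_step (hT : G.IsTree) {v u : V} (h : G.Adj v u) {x y : V}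
    (w : G.Walk x y) :
    ((G.deleteEdges {s(v, u)}).Reachable v x ∨ (G.deleteEdges {s(v, u)}).Reachable u x) →
    ((G.deleteEdges {s(v, u)}).Reachable v y ∨ (G.deleteEdges {s(v, u)}).Reachable u y) := by
  induction w with
  | nil => exact id
  | @cons x b y hadj p ih =>
    intro hx
    apply ih
    by_cases he : s(x, b) = s(v, u)
    · rw [Sym2.eq_iff] at he
      rcases he with ⟨hx1, hb1⟩ | ⟨hx1, hb1⟩
      · right; rw [hb1]
      · left; rw [hb1]
    · have hadj' : (G.deleteEdges {s(v, u)}).Adj x b := by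
        rw [deleteEdges_adj]
        exact ⟨hadj, by simpa using he⟩
      exact hx.imp (fun hr => hr.trans hadj'.reachable) (fun hr => hr.trans hadj'.reachable)

private lemma odd_tree_cover (hT : G.IsTree) {v u : V} (h : G.Adj v u) (a : V) :
    (G.deleteEdges {s(v, u)}).Reachable v a ∨ (G.deleteEdges {s(v, u)}).Reachable u a := by
  obtain ⟨w⟩ := hT.isConnected.preconnected v a
  exact odd_tree_step hT h w (Or.inl (Reachable.refl v))

/-- The `u`-side branch edge set. -/
private def brS (G : SimpleGraph V) (v u : V) : Set (Sym2 V) :=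
  {e ∈ (G.deleteEdges {s(v, u)}).edgeSet |
      ∀ a ∈ e, (G.deleteEdges {s(v, u)}).Reachable u a}

/-- An edge of the branch of `u` does not contain `v`. -/
private lemma odd_tree_not_mem_brS (hT : G.IsTree) {v u : V} (h : G.Adj v u)
    {e : Sym2 V} (he : e ∈ brS G v u) (hv : v ∈ e) : False :=
  odd_tree_bridge hT h ((he.2 v hv).symm)

/-- Every edge not containing `v` belongs to the branch of some neighbor. -/
private lemma odd_tree_exists_branch (hT : G.IsTree) {v : V} {e : Sym2 V}
    (he : e ∈ G.edgeSet) (hv : v ∉ e) :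
    ∃ u, G.Adj v u ∧ e ∈ brS G v u := by
  induction e with
  | _ a b =>
    have hab : G.Adj a b := he
    have hva : v ≠ a := fun hh => hv (by rw [hh]; exact Sym2.mem_mk_left a b)
    have hvb : v ≠ b := fun hh => hv (by rw [hh]; exact Sym2.mem_mk_right a b)
    obtain ⟨w⟩ := hT.isConnected.preconnected v a
    obtain ⟨p, hp⟩ := w.toPath
    cases p with
    | nil => exact absurd rfl hva
    | @cons _ u _ hadj q =>
      rw [Walk.cons_isPath_iff] at hp
      refine ⟨u, hadj, ?_, ?_⟩
      · rw [edgeSet_deleteEdges]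
        refine ⟨he, ?_⟩
        simp only [Set.mem_singleton_iff]
        intro hh
        exact hv (hh ▸ Sym2.mem_mk_left v u)
      · -- q avoids v, so it lives in the deleted graph
        have hq : ∀ e' ∈ q.edges, e' ∈ (G.deleteEdges {s(v, u)}).edgeSet := by
          intro e' he'
          rw [edgeSet_deleteEdges]
          refine ⟨q.edges_subset_edgeSet he', ?_⟩
          simp only [Set.mem_singleton_iff]
          intro hh
          exact hp.2 (q.fst_mem_support_of_mem_edges (hh ▸ he'))
        have hra : (G.deleteEdges {s(v, u)}).Reachable u a := ⟨q.transfer _ hq⟩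
        have hadjab : (G.deleteEdges {s(v, u)}).Adj a b := by
          rw [deleteEdges_adj]
          refine ⟨hab, ?_⟩
          simp only [Set.mem_singleton_iff]
          intro hh
          exact hv (by rw [hh]; exact Sym2.mem_mk_left v u)
        intro x hx
        rcases Sym2.mem_iff.mp hx with rfl | rfl
        · exact hra
        · exact hra.trans hadjab.reachable

/-- Branches of distinct neighbors are disjoint. -/
private lemma odd_tree_branch_disjoint (hT : G.IsTree) {v u u' : V}
    (h : G.Adj v u) (h' : G.Adj v u') (huu : u ≠ u') {e : Sym2 V}
    (he : e ∈ brS G v u) (he' : e ∈ brS G v u') : False := by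
  induction e with
  | _ a b =>
    -- In G \ s(v,u'), u' reaches a; the walk avoids v, hence transfers to G \ s(v,u)
    obtain ⟨w⟩ := he'.2 a (Sym2.mem_mk_left a b)
    have hvs : v ∉ w.support := by
      intro hvs
      exact odd_tree_bridge hT h' ⟨(w.takeUntil v hvs).reverse⟩
    have hw : ∀ e' ∈ w.edges, e' ∈ (G.deleteEdges {s(v, u)}).edgeSet := by
      intro e' he''
      have h1 : e' ∈ G.edgeSet := by
        have := w.edges_subset_edgeSet he''
        rw [edgeSet_deleteEdges] at this
        exact this.1
      rw [edgeSet_deleteEdges]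
      refine ⟨h1, ?_⟩
      simp only [Set.mem_singleton_iff]
      intro hh
      exact hvs (w.fst_mem_support_of_mem_edges (hh ▸ he''))
    have hra : (G.deleteEdges {s(v, u)}).Reachable u' a := ⟨w.transfer _ hw⟩
    have hadj' : (G.deleteEdges {s(v, u)}).Adj v u' := by
      rw [deleteEdges_adj]
      refine ⟨h', ?_⟩
      simp only [Set.mem_singleton_iff, Sym2.eq_iff]
      rintro (⟨-, rfl⟩ | ⟨rfl, rfl⟩)
      · exact huu rfl
      · exact huu rfl
    exact odd_tree_bridge hT h
      ((hadj'.reachable.trans hra).trans (he.2 a (Sym2.mem_mk_left a b)).symm)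

end OddTreeAux

/-- In a finite tree with an odd number of edges, every vertex `v` has an incident
edge whose deletion leaves two connected components each containing an even number
of edges. -/
theorem odd_tree_exists_incident_edge_even_components
    {V : Type*} [Fintype V] [DecidableEq V]
    (G : SimpleGraph V) [DecidableRel G.Adj] (hT : G.IsTree)
    (hodd : Odd G.edgeFinset.card) (v : V) :
    ∃ u : V, G.Adj v u ∧
      Even {e ∈ (G.deleteEdges {s(v, u)}).edgeSet |
              ∀ a ∈ e, (G.deleteEdges {s(v, u)}).Reachable v a}.ncard ∧
      Even {e ∈ (G.deleteEdges {s(v, u)}).edgeSet |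
              ∀ a ∈ e, (G.deleteEdges {s(v, u)}).Reachable u a}.ncard := by
  classical
  -- the v-side set
  set m := G.edgeFinset.card with hm
  -- For each neighbor u, the v-side and u-side partition the deleted edge set,
  -- which has even cardinality m - 1; so their parities agree.
  have key : ∀ u : V, G.Adj v u →
      (Even {e ∈ (G.deleteEdges {s(v, u)}).edgeSet |
              ∀ a ∈ e, (G.deleteEdges {s(v, u)}).Reachable v a}.ncard ↔
       Even (brS G v u).ncard) := by
    intro u h
    set A := {e ∈ (G.deleteEdges {s(v, u)}).edgeSet |
              ∀ a ∈ e, (G.deleteEdges {s(v, u)}).Reachable v a} with hA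
    have hunion : A ∪ brS G v u = (G.deleteEdges {s(v, u)}).edgeSet := by
      apply Set.Subset.antisymm
      · rintro e (he | he) <;> exact he.1
      · intro e he
        induction e with
        | _ a b =>
          have hadj : (G.deleteEdges {s(v, u)}).Adj a b := he
          rcases odd_tree_cover hT h a with hr | hr
          · left
            refine ⟨he, ?_⟩
            intro x hx
            rcases Sym2.mem_iff.mp hx with rfl | rfl
            · exact hr
            · exact hr.trans hadj.reachable
          · right
            refine ⟨he, ?_⟩
            intro x hx
            rcases Sym2.mem_iff.mp hx with rfl | rfl
            · exact hr
            · exact hr.trans hadj.reachable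
    have hdisj : Disjoint A (brS G v u) := by
      rw [Set.disjoint_left]
      rintro e heA heB
      induction e with
      | _ a b =>
        exact odd_tree_bridge hT h
          ((heA.2 a (Sym2.mem_mk_left a b)).trans (heB.2 a (Sym2.mem_mk_left a b)).symm)
    have hcard : A.ncard + (brS G v u).ncard = m - 1 := by
      rw [← Set.ncard_union_eq hdisj (Set.toFinite _) (Set.toFinite _), hunion,
        edgeSet_deleteEdges,
        Set.ncard_diff_singleton_of_mem (G.mem_edgeSet.mpr h)]
      congr 1
      rw [hm, ← Set.ncard_coe_finset]
      congr 1
      simp [Set.ext_iff]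
    have heven : Even (m - 1) := Nat.Odd.sub_odd hodd odd_one
    rw [← hcard] at heven
    rw [Nat.even_add] at heven
    exact heven
  -- Counting: m = deg v + ∑ branch sizes
  have hpart : G.edgeFinset =
      G.incidenceFinset v ∪ (G.neighborFinset v).biUnion
        (fun u => (Set.toFinite (brS G v u)).toFinset) := by
    ext e
    simp only [Finset.mem_union, Finset.mem_biUnion, Set.Finite.mem_toFinset,
      mem_edgeFinset, mem_incidenceFinset, mem_neighborFinset]
    constructor
    · intro he
      by_cases hv : v ∈ e
      · exact Or.inl ⟨he, hv⟩
      · obtain ⟨u, hu, hbu⟩ := odd_tree_exists_branch hT he hv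
        exact Or.inr ⟨u, hu, hbu⟩
    · rintro (he | ⟨u, hu, hbu⟩)
      · exact he.1
      · have := hbu.1
        rw [edgeSet_deleteEdges] at this
        exact this.1
  have hdisj1 : Disjoint (G.incidenceFinset v)
      ((G.neighborFinset v).biUnion (fun u => (Set.toFinite (brS G v u)).toFinset)) := by
    rw [Finset.disjoint_left]
    intro e he hb
    rw [Finset.mem_biUnion] at hb
    obtain ⟨u, hu, hbu⟩ := hb
    rw [Set.Finite.mem_toFinset] at hbu
    rw [mem_incidenceFinset] at he
    exact odd_tree_not_mem_brS hT ((mem_neighborFinset G v u).mp hu) hbu he.2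
  have hcard2 : m = G.degree v +
      ∑ u ∈ G.neighborFinset v, (brS G v u).ncard := by
    rw [hm, hpart, Finset.card_union_of_disjoint hdisj1, Finset.card_biUnion, 
      G.card_incidenceFinset_eq_degree]
    · congr 1
      apply Finset.sum_congr rfl
      intro u hu
      exact (Set.ncard_eq_toFinset_card _ _).symm
    · intro u hu u' hu' huu
      rw [Function.onFun, Finset.disjoint_left]
      intro e he he'
      rw [Set.Finite.mem_toFinset] at he he'
      exact odd_tree_branch_disjoint hT ((mem_neighborFinset G v u).mp hu)
        ((mem_neighborFinset G v u').mp hu') huu he he'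
  -- If every branch were odd, m would be even
  by_contra hcon
  push_neg at hcon
  have hoddall : ∀ u ∈ G.neighborFinset v, Odd (brS G v u).ncard := by
    intro u hu
    have hadj := (mem_neighborFinset G v u).mp hu
    rw [← Nat.not_even_iff_odd]
    intro heven
    exact hcon u hadj ((key u hadj).mpr heven) heven
  have : Even (∑ u ∈ G.neighborFinset v, ((brS G v u).ncard + 1)) := by
    apply Finset.even_sum
    intro u hu
    simpa using (hoddall u hu).add_one
  rw [Finset.sum_add_distrib, Finset.sum_const, smul_eq_mul, mul_one] at this
  rw [Nat.add_comm, G.card_neighborFinset_eq_degree, ← hcard2] at this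
  exact (Nat.not_even_iff_odd.mpr hodd) this
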